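/- Let K be a linear ordered field and F a subfield of K. If α ∈ K is algebraic over F and α > 0, then there exist elements e, d of F with 0 < e, e < α, and α < d. In other words, every positive element of K that is algebraic over F can be sandwiched strictly between two positive elements of F. -/

import Mathlib

open Polynomial Finset

lemma subfield_abs_mem {K : Type*} [Field K] [LinearOrder K] [IsStrictOrderedRing K] (F : Subfield K) {x : K}
    (hx : x ∈ F) : |x| ∈ F := by
  rcases abs_choice x with h | h <;> rw [h]
  · exact hx
  · exact F.neg_mem hx

/-- Upper bound: every element algebraic over a subfield is bounded above by an element
of the subfield. -/
lemma exists_mem_subfield_upper {K : Type*} [Field K] [LinearOrder K] [IsStrictOrderedRing K] (F : Subfield K) (α : K)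
    (halg : IsAlgebraic F α) : ∃ d : F, α < (d : K) := by
  obtain ⟨p, hp, hev⟩ := halg
  set q : K[X] := p.map (algebraMap F K) with hq_def
  have hq : q ≠ 0 := (Polynomial.map_ne_zero_iff (RingHom.injective _)).mpr hp
  have hqev : q.eval α = 0 := by
    rw [hq_def, Polynomial.eval_map, ← Polynomial.aeval_def, hev]
  have hcoeff : ∀ i, q.coeff i ∈ F := by
    intro i
    rw [hq_def, Polynomial.coeff_map]
    exact (p.coeff i).2
  set n := q.natDegree with hn_def
  have hn : n ≠ 0 := by
    intro h
    have := Polynomial.eq_C_of_natDegree_eq_zero h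
    rw [this] at hqev hq
    simp at hqev
    simp [hqev] at hq
  set c := q.leadingCoeff with hc_def
  have hc : c ≠ 0 := Polynomial.leadingCoeff_ne_zero.mpr hq
  have hcabs : 0 < |c| := abs_pos.mpr hc
  set S : K := ∑ i ∈ range n, |q.coeff i| with hS_def
  have hSmem : S ∈ F := F.sum_mem fun i _ => subfield_abs_mem F (hcoeff i)
  have hS0 : 0 ≤ S := Finset.sum_nonneg fun i _ => abs_nonneg _
  set D : K := 1 + S / |c| with hD_def
  have hDmem : D ∈ F := F.add_mem F.one_mem
    (F.div_mem hSmem (subfield_abs_mem F (hcoeff n)))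
  set d : K := max 2 D with hd_def
  have hdmem : d ∈ F := by
    rcases max_choice 2 D with h | h <;> rw [hd_def, h]
    · rw [← one_add_one_eq_two]; exact F.add_mem F.one_mem F.one_mem
    · exact hDmem
  refine ⟨⟨d, hdmem⟩, ?_⟩
  show α < d
  rcases le_or_gt α 1 with h1 | h1
  · calc α ≤ 1 := h1
      _ < 2 := one_lt_two
      _ ≤ d := le_max_left _ _
  · -- main Cauchy-type bound
    have hα0 : 0 < α := lt_trans one_pos h1
    have key : q.eval α = ∑ i ∈ range (n + 1), q.coeff i * α ^ i := by
      rw [Polynomial.eval_eq_sum_range]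
    rw [Finset.sum_range_succ] at key
    have hcn : q.coeff n = c := rfl
    have heq : c * α ^ n = -(∑ i ∈ range n, q.coeff i * α ^ i) := by
      have := key.symm.trans hqev
      rw [hcn] at this
      linarith [this]
    have habs : |c| * α ^ n ≤ S * α ^ (n - 1) := by
      calc |c| * α ^ n = |c * α ^ n| := by
            rw [abs_mul, abs_of_pos (pow_pos hα0 n)]
        _ = |∑ i ∈ range n, q.coeff i * α ^ i| := by rw [heq, abs_neg]
        _ ≤ ∑ i ∈ range n, |q.coeff i * α ^ i| := Finset.abs_sum_le_sum_abs _ _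
        _ ≤ ∑ i ∈ range n, |q.coeff i| * α ^ (n - 1) := by
            refine Finset.sum_le_sum fun i hi => ?_
            rw [abs_mul, abs_of_pos (pow_pos hα0 i)]
            have : α ^ i ≤ α ^ (n - 1) :=
              pow_le_pow_right₀ h1.le (Nat.le_sub_one_of_lt (Finset.mem_range.mp hi))
            exact mul_le_mul_of_nonneg_left this (abs_nonneg _)
        _ = S * α ^ (n - 1) := by rw [hS_def, Finset.sum_mul]
    have hpow : α ^ n = α * α ^ (n - 1) := by
      conv_lhs => rw [← Nat.succ_pred_eq_of_pos (Nat.pos_of_ne_zero hn)]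
      rw [pow_succ']
      rfl
    have hαS : |c| * α ≤ S := by
      have hppos : 0 < α ^ (n - 1) := pow_pos hα0 _
      rw [hpow, ← mul_assoc] at habs
      exact le_of_mul_le_mul_right habs hppos
    have : α ≤ S / |c| := (le_div_iff₀ hcabs).mpr (by linarith [hαS])
    calc α ≤ S / |c| := this
      _ < D := by rw [hD_def]; linarith
      _ ≤ d := le_max_right _ _

/-- Every positive element of a linear ordered field `K` that is algebraic over a subfield
`F` can be sandwiched strictly between two positive elements of `F`. -/
theorem exists_mem_subfield_sandwich
    {K : Type*} [Field K] [LinearOrder K] [IsStrictOrderedRing K] (F : Subfield K) (α : K)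
    (halg : IsAlgebraic F α) (hpos : 0 < α) :
    ∃ e d : F, 0 < (e : K) ∧ (e : K) < α ∧ α < (d : K) := by
  obtain ⟨d, hd⟩ := exists_mem_subfield_upper F α halg
  obtain ⟨d', hd'⟩ := exists_mem_subfield_upper F α⁻¹ halg.inv
  have hαinv : 0 < α⁻¹ := inv_pos.mpr hpos
  have hd'pos : 0 < (d' : K) := lt_trans hαinv hd'
  refine ⟨⟨(d' : K)⁻¹, F.inv_mem d'.2⟩, d, ?_, ?_, hd⟩
  · exact inv_pos.mpr hd'pos
  · show ((d' : K))⁻¹ < α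
    rw [inv_lt_iff_one_lt_mul₀ hd'pos]
    calc (1 : K) = α * α⁻¹ := (mul_inv_cancel₀ hpos.ne').symm
      _ < α * d' := by exact mul_lt_mul_of_pos_left hd' hpos
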